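/- Let n ≥ 1 and define h_n : [0,1]^n → [0,1) by h_n(x) = min(1 − 2^{−(n+1)}, (2^{n+1}−1)·min_{1≤i≤n} x_i). Let k_1, …, k_{n+1} ≥ 0 be integers with k_{n+1} ≥ 1, with k_i = 0 for some 1 ≤ i ≤ n, and with k_1 + ⋯ + k_{n+1} ≤ n. Let a_j = m_j·2^{−k_j} for integers 0 ≤ m_j < 2^{k_j} (1 ≤ j ≤ n+1). Then h_n crosses the box S = ∏_{j=1}^{n+1} [a_j, a_j + 2^{−k_j}). -/

import Mathlib

open MeasureTheory

/-- `f` crosses `S ⊆ ℝ^{n+1}` if both the part of `S` strictly below the graph of `f`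
and the part strictly above it have positive Lebesgue measure. -/
def Crosses (n : ℕ) (f : (Fin n → ℝ) → ℝ) (S : Set (Fin (n + 1) → ℝ)) : Prop :=
  0 < volume (S ∩ {p | f (fun j => p j.castSucc) < p (Fin.last n)}) ∧
  0 < volume (S ∩ {p | p (Fin.last n) < f (fun j => p j.castSucc)})

/-- The function `h_n(x) = min(1 - 2^{-(n+1)}, (2^{n+1} - 1) · min_i x_i)`. -/
noncomputable def hfun (n : ℕ) (x : Fin n → ℝ) : ℝ :=
  min (1 - ((2 : ℝ) ^ (n + 1))⁻¹) (((2 : ℝ) ^ (n + 1) - 1) * ⨅ i, x i)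

theorem stmt_13 (n : ℕ) (hn : 1 ≤ n) (k m : Fin (n + 1) → ℕ)
    (hm : ∀ j, m j < 2 ^ k j)
    (hklast : 1 ≤ k (Fin.last n))
    (hkzero : ∃ i : Fin n, k i.castSucc = 0)
    (hksum : ∑ j, k j ≤ n) :
    Crosses n (hfun n)
      (Set.univ.pi fun j : Fin (n + 1) =>
        Set.Ico ((m j : ℝ) / 2 ^ k j) ((m j : ℝ) / 2 ^ k j + ((2 : ℝ) ^ k j)⁻¹)) := by
  obtain ⟨i, hki⟩ := hkzero
  haveI : Nonempty (Fin n) := ⟨⟨0, hn⟩⟩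
  have h2 : (1:ℝ) < 2 ^ (n+1) := by
    have : (2:ℝ)^0 < 2^(n+1) := pow_lt_pow_right₀ one_lt_two (by omega)
    simpa using this
  have h2m1 : (0:ℝ) < 2 ^ (n+1) - 1 := by linarith
  set c : ℝ := ((2:ℝ)^(n+1))⁻¹ with hc
  have hcpos : 0 < c := by positivity
  set ε : ℝ := c / ((2:ℝ)^(n+1) - 1) with hε
  have hεpos : 0 < ε := by positivity
  have hεc : ((2:ℝ)^(n+1) - 1) * ε = c := by
    rw [hε]; field_simp
  have hk : ∀ j, k j ≤ n := fun j =>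
    le_trans (Finset.single_le_sum (fun _ _ => Nat.zero_le _) (Finset.mem_univ j)) hksum
  -- widths
  have hw : ∀ j, (0:ℝ) < ((2:ℝ)^(k j))⁻¹ := fun j => by positivity
  have hwc : ∀ j, c < ((2:ℝ)^(k j))⁻¹ := by
    intro j
    rw [hc]
    apply inv_strictAnti₀ (by positivity)
    exact pow_lt_pow_right₀ one_lt_two (by have := hk j; omega)
  have ha0 : ∀ j, (0:ℝ) ≤ (m j : ℝ) / 2 ^ k j := fun j => by positivity
  have hub : ∀ j, (m j : ℝ) / 2 ^ k j + ((2:ℝ)^(k j))⁻¹ ≤ 1 := by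
    intro j
    have h1 : (m j : ℝ) + 1 ≤ 2 ^ (k j) := by
      have := hm j; exact_mod_cast Nat.succ_le_of_lt this
    have h2' : (0:ℝ) < 2 ^ (k j) := by positivity
    rw [inv_eq_one_div, ← add_div]
    exact div_le_one_of_le₀ h1 h2'.le
  have hmi : m i.castSucc = 0 := by have := hm i.castSucc; rw [hki] at this; omega
  have hai : ((m i.castSucc : ℝ) / 2 ^ k i.castSucc) = 0 := by rw [hmi]; simp
  have hwi : ((2:ℝ) ^ k i.castSucc)⁻¹ = 1 := by rw [hki]; simp
  have hine : i.castSucc ≠ Fin.last n := (Fin.castSucc_lt_last i).ne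
  have h4 : (2:ℝ) ≤ 2^(n+1) := by
    calc (2:ℝ) = 2^1 := (pow_one 2).symm
      _ ≤ 2^(n+1) := pow_le_pow_right₀ one_le_two (by omega)
  have hε1 : ε < 1 := by
    have h1 : ε ≤ c := by
      rw [hε]; exact div_le_self hcpos.le (by linarith)
    have h2' : c < 1 := by rw [hc]; exact inv_lt_one_of_one_lt₀ h2
    linarith
  -- half width of last coordinate is at least c
  have hclast : 2 * c ≤ ((2:ℝ)^(k (Fin.last n)))⁻¹ := by
    have h1 : (2:ℝ)^(k (Fin.last n)) ≤ 2^n := pow_le_pow_right₀ one_le_two (hk _)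
    have h2' : ((2:ℝ)^n)⁻¹ ≤ ((2:ℝ)^(k (Fin.last n)))⁻¹ :=
      inv_anti₀ (by positivity) h1
    have h3 : 2 * c = ((2:ℝ)^n)⁻¹ := by
      rw [hc, pow_succ, mul_inv]
      ring
    linarith
  constructor
  · -- part below graph... f < t
    set T : Fin (n+1) → Set ℝ := fun j =>
      if j = Fin.last n then
        Set.Ico ((m j : ℝ)/2^(k j) + ((2:ℝ)^(k j))⁻¹/2) ((m j:ℝ)/2^(k j) + ((2:ℝ)^(k j))⁻¹)
      else if j = i.castSucc then Set.Ico 0 ε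
      else Set.Ico ((m j : ℝ)/2^(k j)) ((m j:ℝ)/2^(k j) + ((2:ℝ)^(k j))⁻¹) with hT
    have hsub : Set.univ.pi T ⊆
        (Set.univ.pi fun j : Fin (n + 1) =>
          Set.Ico ((m j : ℝ) / 2 ^ k j) ((m j : ℝ) / 2 ^ k j + ((2 : ℝ) ^ k j)⁻¹)) ∩
        {p | hfun n (fun j => p j.castSucc) < p (Fin.last n)} := by
      intro p hp
      rw [Set.mem_pi] at hp
      constructor
      · rw [Set.mem_pi]
        intro j _
        have hj := hp j (Set.mem_univ j)
        rcases eq_or_ne j (Fin.last n) with rfl | hjl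
        · simp only [hT, if_true] at hj
          obtain ⟨h1, h2'⟩ := hj
          exact ⟨by nlinarith [hw (Fin.last n)], h2'⟩
        · rcases eq_or_ne j i.castSucc with rfl | hji
          · simp only [hT, if_true] at hj; rw [if_neg hjl] at hj
            obtain ⟨h1, h2'⟩ := hj
            rw [Set.mem_Ico, hai, hwi]
            constructor <;> linarith
          · simp only [hT, if_true] at hj; rw [if_neg hjl, if_neg hji] at hj
            exact hj
      · -- the inequality
        have hlast := hp (Fin.last n) (Set.mem_univ _)
        simp only [hT, if_true] at hlast
        have hpi := hp i.castSucc (Set.mem_univ _)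
        simp only [hT, if_true] at hpi; rw [if_neg hine] at hpi
        show hfun n _ < p (Fin.last n)
        simp only [hfun]
        apply min_lt_iff.mpr
        right
        have hbdd : BddBelow (Set.range fun j : Fin n => p j.castSucc) :=
          Set.Finite.bddBelow (Set.finite_range _)
        have hinf : (⨅ j : Fin n, p j.castSucc) ≤ p i.castSucc := ciInf_le hbdd i
        have h1 : ((2:ℝ)^(n+1) - 1) * (⨅ j : Fin n, p j.castSucc) < c := by
          calc ((2:ℝ)^(n+1) - 1) * (⨅ j : Fin n, p j.castSucc)
              ≤ ((2:ℝ)^(n+1) - 1) * p i.castSucc := by nlinarith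
            _ < ((2:ℝ)^(n+1) - 1) * ε := by nlinarith [hpi.2]
            _ = c := hεc
        have h2' : c ≤ p (Fin.last n) := by
          have := hlast.1
          have := ha0 (Fin.last n)
          nlinarith [hclast]
        linarith
    refine lt_of_lt_of_le ?_ (measure_mono hsub)
    rw [volume_pi_pi]
    refine CanonicallyOrderedAdd.prod_pos.mpr fun j _ => ?_
    rcases eq_or_ne j (Fin.last n) with rfl | hjl
    · simp only [hT, if_true]; rw [Real.volume_Ico]
      apply ENNReal.ofReal_pos.mpr
      have := hw (Fin.last n); linarith
    · rcases eq_or_ne j i.castSucc with rfl | hji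
      · simp only [hT, if_true]; rw [if_neg hjl, Real.volume_Ico]
        exact ENNReal.ofReal_pos.mpr (by linarith)
      · simp only [hT, if_true]; rw [if_neg hjl, if_neg hji, Real.volume_Ico]
        apply ENNReal.ofReal_pos.mpr
        have := hw j; linarith
  · -- t < f : above part
    set T : Fin (n+1) → Set ℝ := fun j =>
      if j = Fin.last n then
        Set.Ico ((m j : ℝ)/2^(k j)) ((m j:ℝ)/2^(k j) + (((2:ℝ)^(k j))⁻¹ - c))
      else Set.Ico (max ((m j : ℝ)/2^(k j)) c) ((m j:ℝ)/2^(k j) + ((2:ℝ)^(k j))⁻¹) with hT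
    have hsub : Set.univ.pi T ⊆
        (Set.univ.pi fun j : Fin (n + 1) =>
          Set.Ico ((m j : ℝ) / 2 ^ k j) ((m j : ℝ) / 2 ^ k j + ((2 : ℝ) ^ k j)⁻¹)) ∩
        {p | p (Fin.last n) < hfun n (fun j => p j.castSucc)} := by
      intro p hp
      rw [Set.mem_pi] at hp
      constructor
      · rw [Set.mem_pi]
        intro j _
        have hj := hp j (Set.mem_univ j)
        rcases eq_or_ne j (Fin.last n) with rfl | hjl
        · simp only [hT, if_true] at hj
          exact ⟨hj.1, by have := hj.2; linarith⟩
        · simp only [hT, if_true] at hj; rw [if_neg hjl] at hj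
          exact ⟨le_trans (le_max_left _ _) hj.1, hj.2⟩
      · have hlast := hp (Fin.last n) (Set.mem_univ _)
        simp only [hT, if_true] at hlast
        show p (Fin.last n) < hfun n _
        simp only [hfun]
        have hple : p (Fin.last n) < 1 - c := by
          have := hlast.2
          have := hub (Fin.last n)
          linarith
        apply lt_min hple
        have hinf : c ≤ (⨅ j : Fin n, p j.castSucc) := by
          apply le_ciInf
          intro j
          have hj := hp j.castSucc (Set.mem_univ _)
          simp only [hT, if_true] at hj; rw [if_neg (Fin.castSucc_lt_last j).ne] at hj
          exact le_trans (le_max_right _ _) hj.1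
        have heq : ((2:ℝ)^(n+1) - 1) * c = 1 - c := by
          rw [hc, sub_mul, mul_inv_cancel₀ (by positivity : ((2:ℝ)^(n+1)) ≠ 0)]
          ring
        calc p (Fin.last n) < 1 - c := hple
          _ = ((2:ℝ)^(n+1) - 1) * c := heq.symm
          _ ≤ ((2:ℝ)^(n+1) - 1) * (⨅ j : Fin n, p j.castSucc) := by nlinarith
    refine lt_of_lt_of_le ?_ (measure_mono hsub)
    rw [volume_pi_pi]
    refine CanonicallyOrderedAdd.prod_pos.mpr fun j _ => ?_
    rcases eq_or_ne j (Fin.last n) with rfl | hjl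
    · simp only [hT, if_true]; rw [Real.volume_Ico]
      apply ENNReal.ofReal_pos.mpr
      have := hwc (Fin.last n); linarith
    · simp only [hT, if_true]; rw [if_neg hjl, Real.volume_Ico]
      apply ENNReal.ofReal_pos.mpr
      have h1 := hwc j
      have h2' := ha0 j
      have h3 := hw j
      rw [sub_pos]
      apply max_lt <;> linarith
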